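/- Let X be an L1-predual and let (e_n*) be a sequence of distinct elements of ext(B_{X*}) such that e_i* ≠ −e_j* for all i, j. Then (e_n*) is isometrically equivalent to the usual ℓ1-basis; that is, ‖Σ_{i=1}^n a_i e_i*‖ = Σ_{i=1}^n |a_i| for all n and all scalars a₁, …, a_n. -/

import Mathlib

open NormedSpace MeasureTheory Filter Topology

/-- A real Banach space `X` is an `L₁`-predual if its dual is isometrically isomorphic
to `L₁(μ)` for some measure space. -/
def IsL1Predual (X : Type*) [NormedAddCommGroup X] [NormedSpace ℝ X] : Prop :=
  ∃ (Ω : Type) (_ : MeasurableSpace Ω) (μ : Measure Ω),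
    Nonempty (StrongDual ℝ X ≃ₗᵢ[ℝ] Lp ℝ 1 μ)

section Aux

variable {Ω : Type} [MeasurableSpace Ω] {μ : Measure Ω}

/-- An extreme point of the closed unit ball of a nontrivial normed space has norm 1. -/
theorem aux_extreme_norm_one {E : Type*} [NormedAddCommGroup E] [NormedSpace ℝ E] [Nontrivial E]
    {f : E} (hf : f ∈ Set.extremePoints ℝ (Metric.closedBall (0 : E) 1)) : ‖f‖ = 1 := by
  obtain ⟨hf1, hf2⟩ := hf
  rw [Metric.mem_closedBall, dist_zero_right] at hf1
  by_contra hne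
  have hlt : ‖f‖ < 1 := lt_of_le_of_ne hf1 hne
  obtain ⟨v, hv⟩ := exists_ne (0 : E)
  have hvpos : 0 < ‖v‖ := norm_pos_iff.2 hv
  set w : E := ((1 - ‖f‖) / ‖v‖) • v with hw
  have hwn : ‖w‖ = 1 - ‖f‖ := by
    rw [hw, norm_smul, Real.norm_eq_abs, abs_of_pos (div_pos (by linarith) hvpos),
      div_mul_cancel₀]
    exact hvpos.ne'
  have hwne : w ≠ 0 := by
    intro h
    rw [h, norm_zero] at hwn
    linarith
  have hmem1 : f + w ∈ Metric.closedBall (0 : E) 1 := by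
    rw [Metric.mem_closedBall, dist_zero_right]
    calc ‖f + w‖ ≤ ‖f‖ + ‖w‖ := norm_add_le _ _
    _ = 1 := by rw [hwn]; ring
  have hmem2 : f - w ∈ Metric.closedBall (0 : E) 1 := by
    rw [Metric.mem_closedBall, dist_zero_right]
    calc ‖f - w‖ ≤ ‖f‖ + ‖w‖ := norm_sub_le _ _
    _ = 1 := by rw [hwn]; ring
  have hseg : f ∈ openSegment ℝ (f + w) (f - w) :=
    ⟨1/2, 1/2, by norm_num, by norm_num, by norm_num, by module⟩
  have h12 := (hf2 hmem1 hmem2 hseg)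
  exact hwne (by rwa [add_eq_left] at h12)

theorem aux_norm_L1 (f : Lp ℝ 1 μ) : ‖f‖ = ∫ x, |f x| ∂μ := by
  rw [MeasureTheory.L1.norm_eq_integral_norm]
  simp only [Real.norm_eq_abs]

/-- If the integral of `|f|` over a set is zero, `f` vanishes a.e. on that set. -/
theorem aux_vanish {f : Ω → ℝ} (hfi : Integrable f μ) {S : Set Ω} (hS : MeasurableSet S)
    (h : ∫ x in S, |f x| ∂μ = 0) : ∀ᵐ x ∂μ, x ∈ S → f x = 0 := by
  have h0 : (fun x => |f x|) =ᵐ[μ.restrict S] 0 :=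
    (integral_eq_zero_iff_of_nonneg (fun x => abs_nonneg (f x)) hfi.abs.restrict).1 h
  rw [Filter.EventuallyEq, ae_restrict_iff' hS] at h0
  filter_upwards [h0] with x hx hxS
  exact abs_eq_zero.1 (hx hxS)

/-- Key property: an extreme point of the unit ball of `L¹(μ)` has `∫_E |f| ∈ {0,1}`
for every measurable set `E`. -/
theorem aux_zero_one [Nontrivial (Lp ℝ 1 μ)] {f : Lp ℝ 1 μ}
    (hf : f ∈ Set.extremePoints ℝ (Metric.closedBall (0 : Lp ℝ 1 μ) 1))
    {E : Set Ω} (hE : MeasurableSet E) :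
    (∫ x in E, |f x| ∂μ) = 0 ∨ (∫ x in E, |f x| ∂μ) = 1 := by
  have hfi : Integrable f μ := L1.integrable_coeFn f
  have hfa : Integrable (fun x => |f x|) μ := hfi.abs
  have h1 : ‖f‖ = 1 := aux_extreme_norm_one hf
  set t := ∫ x in E, |f x| ∂μ with htdef
  have ht0 : 0 ≤ t := setIntegral_nonneg hE fun x _ => abs_nonneg _
  have htc : t + ∫ x in Eᶜ, |f x| ∂μ = 1 := by
    rw [htdef, integral_add_compl hE hfa, ← aux_norm_L1, h1]
  have htc0 : 0 ≤ ∫ x in Eᶜ, |f x| ∂μ := setIntegral_nonneg hE.compl fun x _ => abs_nonneg _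
  by_contra hcon
  push_neg at hcon
  obtain ⟨ht0', ht1'⟩ := hcon
  have htpos : 0 < t := lt_of_le_of_ne ht0 (Ne.symm ht0')
  have htlt : t < 1 := lt_of_le_of_ne (by linarith) ht1'
  -- build the two halves
  set g1 : Ω → ℝ := E.indicator (fun x => t⁻¹ * f x) with hg1
  set g2 : Ω → ℝ := Eᶜ.indicator (fun x => (1 - t)⁻¹ * f x) with hg2
  have hg1i : Integrable g1 μ := (hfi.const_mul _).indicator hE
  have hg2i : Integrable g2 μ := (hfi.const_mul _).indicator hE.compl
  set u : Lp ℝ 1 μ := (memLp_one_iff_integrable.2 hg1i).toLp g1 with hu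
  set v : Lp ℝ 1 μ := (memLp_one_iff_integrable.2 hg2i).toLp g2 with hv
  have hucoe : ⇑u =ᵐ[μ] g1 := MemLp.coeFn_toLp _
  have hvcoe : ⇑v =ᵐ[μ] g2 := MemLp.coeFn_toLp _
  have hpt : ∀ x : Ω, t * (E.indicator (fun y => t⁻¹ * f y) x)
      + (1 - t) * (Eᶜ.indicator (fun y => (1 - t)⁻¹ * f y) x) = f x := by
    intro x
    by_cases hx : x ∈ E
    · rw [Set.indicator_of_mem hx, Set.indicator_of_notMem (by simpa using hx)]
      field_simp
      ring
    · rw [Set.indicator_of_notMem hx, Set.indicator_of_mem (by simpa using hx)]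
      have h5 : (1 - t) ≠ 0 := by linarith
      field_simp
      ring
  have hfeq : t • u + (1 - t) • v = f := by
    apply Lp.ext
    filter_upwards [Lp.coeFn_add (t • u) ((1 - t) • v), Lp.coeFn_smul t u,
      Lp.coeFn_smul (1 - t) v, hucoe, hvcoe] with x hadd hsu hsv hux hvx
    rw [hadd]
    simp only [Pi.add_apply] at *
    rw [hsu, hsv]
    simp only [Pi.smul_apply, smul_eq_mul, hux, hvx]
    exact hpt x
  have habsu : ∫ x, |u x| ∂μ = 1 := by
    have : ∫ x, |u x| ∂μ = ∫ x, E.indicator (fun y => |t⁻¹ * f y|) x ∂μ := by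
      apply integral_congr_ae
      filter_upwards [hucoe] with x hux
      rw [hux, hg1]
      by_cases hx : x ∈ E
      · rw [Set.indicator_of_mem hx, Set.indicator_of_mem hx]
      · rw [Set.indicator_of_notMem hx, Set.indicator_of_notMem hx, abs_zero]
    rw [this, integral_indicator hE]
    have : ∫ x in E, |t⁻¹ * f x| ∂μ = ∫ x in E, t⁻¹ * |f x| ∂μ := by
      apply setIntegral_congr_fun hE
      intro x _
      simp only [abs_mul, abs_of_pos (inv_pos.2 htpos)]
    rw [this, integral_const_mul, ← htdef, inv_mul_cancel₀ htpos.ne']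
  have habsv : ∫ x, |v x| ∂μ = 1 := by
    have h2 : ∫ x in Eᶜ, |f x| ∂μ = 1 - t := by linarith
    have : ∫ x, |v x| ∂μ = ∫ x, Eᶜ.indicator (fun y => |(1 - t)⁻¹ * f y|) x ∂μ := by
      apply integral_congr_ae
      filter_upwards [hvcoe] with x hvx
      rw [hvx, hg2]
      by_cases hx : x ∈ Eᶜ
      · rw [Set.indicator_of_mem hx, Set.indicator_of_mem hx]
      · rw [Set.indicator_of_notMem hx, Set.indicator_of_notMem hx, abs_zero]
    rw [this, integral_indicator hE.compl]
    have : ∫ x in Eᶜ, |(1 - t)⁻¹ * f x| ∂μ = ∫ x in Eᶜ, (1 - t)⁻¹ * |f x| ∂μ := by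
      apply setIntegral_congr_fun hE.compl
      intro x _
      simp only [abs_mul, abs_of_pos (inv_pos.2 (show (0:ℝ) < 1 - t by linarith))]
    rw [this, integral_const_mul, h2, inv_mul_cancel₀ (by linarith)]
  have humem : u ∈ Metric.closedBall (0 : Lp ℝ 1 μ) 1 := by
    rw [Metric.mem_closedBall, dist_zero_right, aux_norm_L1, habsu]
  have hvmem : v ∈ Metric.closedBall (0 : Lp ℝ 1 μ) 1 := by
    rw [Metric.mem_closedBall, dist_zero_right, aux_norm_L1, habsv]
  have hseg : f ∈ openSegment ℝ u v :=
    ⟨t, 1 - t, htpos, by linarith, by ring, hfeq⟩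
  have huf : u = f := (hf.2 humem hvmem hseg)
  -- then f vanishes off E, so t = 1, contradiction
  have hfg1 : ⇑f =ᵐ[μ] g1 := huf ▸ hucoe
  have : ∫ x in Eᶜ, |f x| ∂μ = 0 := by
    have : ∫ x in Eᶜ, |f x| ∂μ = ∫ x in Eᶜ, (0:ℝ) ∂μ := by
      apply setIntegral_congr_ae hE.compl
      filter_upwards [hfg1] with x hx hxc
      rw [hx, hg1, Set.indicator_of_notMem (by simpa using hxc), abs_zero]
    rw [this, integral_zero]
  exact ht1' (by linarith)

/-- An extreme point of the unit ball of `L¹(μ)` has a.e. constant sign. -/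
theorem aux_sign [Nontrivial (Lp ℝ 1 μ)] {f : Lp ℝ 1 μ}
    (hf : f ∈ Set.extremePoints ℝ (Metric.closedBall (0 : Lp ℝ 1 μ) 1)) :
    (∀ᵐ x ∂μ, 0 ≤ f x) ∨ (∀ᵐ x ∂μ, f x ≤ 0) := by
  have hfi : Integrable f μ := L1.integrable_coeFn f
  have hmf : Measurable f := (Lp.stronglyMeasurable f).measurable
  set E : Set Ω := {x | 0 ≤ f x} with hEdef
  have hE : MeasurableSet E := measurableSet_le measurable_const hmf
  rcases aux_zero_one hf hE with h | h
  · right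
    have := aux_vanish hfi hE h
    filter_upwards [this] with x hx
    by_cases hxE : x ∈ E
    · rw [hx hxE]
    · exact le_of_lt (by simpa [hEdef] using hxE)
  · left
    have h1 : ‖f‖ = 1 := aux_extreme_norm_one hf
    have hcompl : ∫ x in Eᶜ, |f x| ∂μ = 0 := by
      have := integral_add_compl hE hfi.abs (f := fun x => |f x|)
      rw [← aux_norm_L1] at this
      rw [h1] at this
      linarith [h ▸ this]
    have := aux_vanish hfi hE.compl hcompl
    filter_upwards [this] with x hx
    by_cases hxE : x ∈ E
    · exact hxE
    · rw [hx (by simpa using hxE)]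

/-- Two distinct nonnegative extreme points of the unit ball of `L¹(μ)` have a.e.
disjoint supports. -/
theorem aux_disjoint [Nontrivial (Lp ℝ 1 μ)] {f g : Lp ℝ 1 μ}
    (hf : f ∈ Set.extremePoints ℝ (Metric.closedBall (0 : Lp ℝ 1 μ) 1))
    (hg : g ∈ Set.extremePoints ℝ (Metric.closedBall (0 : Lp ℝ 1 μ) 1))
    (hf0 : ∀ᵐ x ∂μ, 0 ≤ f x) (hg0 : ∀ᵐ x ∂μ, 0 ≤ g x)
    (hne : f ≠ g) : ∀ᵐ x ∂μ, f x = 0 ∨ g x = 0 := by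
  -- key step: either f ≤ g a.e., or supports disjoint
  have key : ∀ (u v : Lp ℝ 1 μ),
      u ∈ Set.extremePoints ℝ (Metric.closedBall (0 : Lp ℝ 1 μ) 1) →
      v ∈ Set.extremePoints ℝ (Metric.closedBall (0 : Lp ℝ 1 μ) 1) →
      (∀ᵐ x ∂μ, 0 ≤ u x) → (∀ᵐ x ∂μ, 0 ≤ v x) →
      (∀ᵐ x ∂μ, u x ≤ v x) ∨ (∀ᵐ x ∂μ, u x = 0 ∨ v x = 0) := by
    intro u v hu hv hu0 hv0
    have hui : Integrable u μ := L1.integrable_coeFn u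
    have hvi : Integrable v μ := L1.integrable_coeFn v
    have hmu : Measurable u := (Lp.stronglyMeasurable u).measurable
    have hmv : Measurable v := (Lp.stronglyMeasurable v).measurable
    set E : Set Ω := {x | v x < u x} with hEdef
    have hE : MeasurableSet E := measurableSet_lt hmv hmu
    rcases aux_zero_one hu hE with h | h
    · left
      have := aux_vanish hui hE h
      filter_upwards [this, hv0] with x hx hvx
      by_contra hc
      push_neg at hc
      have hxE : x ∈ E := hc
      have := hx hxE
      rw [this] at hc
      exact absurd hvx (not_le.2 hc)
    · -- u is concentrated on E; show v vanishes on E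
      have hucompl : ∫ x in Eᶜ, |u x| ∂μ = 0 := by
        have h1 : ‖u‖ = 1 := aux_extreme_norm_one hu
        have := integral_add_compl hE hui.abs (f := fun x => |u x|)
        rw [← aux_norm_L1, h1] at this
        linarith [h ▸ this]
      have huoff := aux_vanish hui hE.compl hucompl
      rcases aux_zero_one hv hE with h' | h'
      · -- v vanishes on E: disjoint supports
        right
        have hvon := aux_vanish hvi hE h'
        filter_upwards [huoff, hvon] with x hx1 hx2
        by_cases hxE : x ∈ E
        · exact Or.inr (hx2 hxE)
        · exact Or.inl (hx1 (by simpa using hxE))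
      · -- both integrals over E equal 1, but u > v on E: contradiction
        exfalso
        have h2 : ∫ x in E, |u x| - |v x| ∂μ = 0 := by
          rw [integral_sub hui.abs.restrict hvi.abs.restrict, h, h']
          ring
        have hpos : 0 ≤ᵐ[μ.restrict E] fun x => |u x| - |v x| := by
          rw [EventuallyLE, ae_restrict_iff' hE]
          filter_upwards [hu0, hv0] with x hux hvx hxE
          have h3 : v x < u x := hxE
          simp only [Pi.zero_apply]
          rw [abs_of_nonneg hux, abs_of_nonneg hvx]
          linarith
        have hzero : (fun x => |u x| - |v x|) =ᵐ[μ.restrict E] 0 :=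
          (integral_eq_zero_iff_of_nonneg_ae hpos (hui.abs.restrict.sub hvi.abs.restrict)).1 h2
        -- a.e. on E, |u| = |v|, but also u > v ≥ 0 on E: so E is null, contradicting h = 1
        have hEnull : μ E = 0 := by
          rw [Filter.EventuallyEq, ae_restrict_iff' hE] at hzero
          have hfalse : ∀ᵐ x ∂μ, x ∉ E := by
            filter_upwards [hzero, hu0, hv0] with x hx hux hvx
            intro hxE
            have h3 : v x < u x := hxE
            have h4 := hx hxE
            simp only [Pi.zero_apply] at h4
            rw [abs_of_nonneg hux, abs_of_nonneg hvx] at h4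
            linarith
          rw [ae_iff] at hfalse
          simpa using hfalse
        have : ∫ x in E, |u x| ∂μ = 0 := by
          rw [Measure.restrict_eq_zero.2 hEnull, integral_zero_measure]
        rw [this] at h
        norm_num at h
  rcases key f g hf hg hf0 hg0 with h1 | h1
  · rcases key g f hg hf hg0 hf0 with h2 | h2
    · exfalso
      apply hne
      apply Lp.ext
      filter_upwards [h1, h2] with x hx1 hx2
      exact le_antisymm hx1 hx2
    · filter_upwards [h2] with x hx
      exact hx.symm
  · exact h1

theorem aux_coeFn_sum {ι : Type*} (s : Finset ι) (f : ι → Lp ℝ 1 μ) :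
    ⇑(∑ i ∈ s, f i) =ᵐ[μ] fun x => ∑ i ∈ s, f i x := by
  classical
  induction s using Finset.induction_on with
  | empty => simp only [Finset.sum_empty]; exact Lp.coeFn_zero (E := ℝ) (p := 1) (μ := μ)
  | @insert a s ha ih =>
    rw [Finset.sum_insert ha]
    filter_upwards [Lp.coeFn_add (f a) (∑ i ∈ s, f i), ih] with x h1 h2
    rw [h1]
    simp only [Pi.add_apply, h2, Finset.sum_insert ha]

theorem aux_abs_sum {n : ℕ} (a : Fin n → ℝ) (v : Fin n → ℝ) (h0 : ∀ i, 0 ≤ v i)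
    (hd : ∀ i j, i ≠ j → v i = 0 ∨ v j = 0) :
    |∑ i, a i * v i| = ∑ i, |a i| * v i := by
  by_cases h : ∀ i, v i = 0
  · simp [h]
  · push_neg at h
    obtain ⟨i₀, hi₀⟩ := h
    have hz : ∀ j, j ≠ i₀ → v j = 0 := fun j hj => by
      rcases hd j i₀ hj with h | h
      · exact h
      · exact absurd h hi₀
    rw [Finset.sum_eq_single i₀ (fun j _ hj => by rw [hz j hj, mul_zero]) (by simp),
      Finset.sum_eq_single i₀ (fun j _ hj => by rw [hz j hj, mul_zero]) (by simp),
      abs_mul, abs_of_nonneg (h0 i₀)]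

/-- Norm additivity for a.e.-disjointly supported nonnegative unit vectors in `L¹`. -/
theorem aux_norm_sum {n : ℕ} (f : Fin n → Lp ℝ 1 μ)
    (hn : ∀ i, ‖f i‖ = 1) (h0 : ∀ i, ∀ᵐ x ∂μ, 0 ≤ f i x)
    (hd : ∀ i j, i ≠ j → ∀ᵐ x ∂μ, f i x = 0 ∨ f j x = 0)
    (a : Fin n → ℝ) : ‖∑ i, a i • f i‖ = ∑ i, |a i| := by
  have H0 : ∀ᵐ x ∂μ, ∀ i, 0 ≤ f i x := (ae_all_iff).2 h0
  have Hd : ∀ᵐ x ∂μ, ∀ i j, i ≠ j → f i x = 0 ∨ f j x = 0 := by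
    rw [ae_all_iff]
    intro i
    rw [ae_all_iff]
    intro j
    by_cases hij : i = j
    · exact Eventually.of_forall fun x h => absurd hij h
    · filter_upwards [hd i j hij] with x hx _
      exact hx
  have Hsmul : ∀ᵐ x ∂μ, ∀ i, (a i • f i) x = a i * f i x := by
    rw [ae_all_iff]
    intro i
    filter_upwards [Lp.coeFn_smul (a i) (f i)] with x hx
    rw [hx]; rfl
  have hcoe : ⇑(∑ i, a i • f i) =ᵐ[μ] fun x => ∑ i, a i * f i x := by
    filter_upwards [aux_coeFn_sum Finset.univ (fun i => a i • f i), Hsmul] with x h1 h2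
    rw [h1]
    exact Finset.sum_congr rfl fun i _ => h2 i
  rw [aux_norm_L1]
  have step1 : ∫ x, |(∑ i, a i • f i) x| ∂μ = ∫ x, ∑ i, |a i| * f i x ∂μ := by
    apply integral_congr_ae
    filter_upwards [hcoe, H0, Hd] with x h1 h2 h3
    rw [h1, aux_abs_sum a (fun i => f i x) h2 h3]
  rw [step1, integral_finset_sum _ fun i _ => (L1.integrable_coeFn (f i)).const_mul _]
  apply Finset.sum_congr rfl
  intro i _
  rw [integral_const_mul]
  have : ∫ x, f i x ∂μ = 1 := by
    have h1 : ∫ x, f i x ∂μ = ∫ x, |f i x| ∂μ := by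
      apply integral_congr_ae
      filter_upwards [h0 i] with x hx
      rw [abs_of_nonneg hx]
    rw [h1, ← aux_norm_L1, hn i]
  rw [this, mul_one]

end Aux

theorem stmt_15 {X : Type*} [NormedAddCommGroup X] [NormedSpace ℝ X] [CompleteSpace X]
    (hX : IsL1Predual X) (e : ℕ → StrongDual ℝ X)
    (hext : ∀ n, e n ∈ Set.extremePoints ℝ (Metric.closedBall (0 : StrongDual ℝ X) 1))
    (hinj : Function.Injective e)
    (hsym : ∀ i j, e i ≠ -e j) :
    ∀ (n : ℕ) (a : Fin n → ℝ), ‖∑ i, a i • e i‖ = ∑ i, |a i| := by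
  obtain ⟨Ω, _, μ, ⟨φ⟩⟩ := hX
  have hnt : Nontrivial (Lp ℝ 1 μ) := by
    refine ⟨φ (e 0), φ (e 1), fun h => ?_⟩
    exact hinj.ne (by norm_num : (0:ℕ) ≠ 1) (φ.injective h)
  set F : ℕ → Lp ℝ 1 μ := fun i => φ (e i) with hF
  have hFext : ∀ i, F i ∈ Set.extremePoints ℝ (Metric.closedBall (0 : Lp ℝ 1 μ) 1) := by
    intro i
    have himg := image_extremePoints φ.toLinearEquiv (Metric.closedBall (0 : StrongDual ℝ X) 1)
    have : φ.toLinearEquiv '' Metric.closedBall (0 : StrongDual ℝ X) 1 =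
        Metric.closedBall (0 : Lp ℝ 1 μ) 1 := by
      have := φ.image_closedBall (0 : StrongDual ℝ X) 1
      rw [map_zero] at this
      exact this
    rw [this] at himg
    rw [← himg]
    exact ⟨e i, hext i, rfl⟩
  -- negation preserves extremality
  have hnegext : ∀ (g : Lp ℝ 1 μ),
      g ∈ Set.extremePoints ℝ (Metric.closedBall (0 : Lp ℝ 1 μ) 1) →
      -g ∈ Set.extremePoints ℝ (Metric.closedBall (0 : Lp ℝ 1 μ) 1) := by
    intro g hg
    have himg := image_extremePoints (LinearEquiv.neg ℝ (M := Lp ℝ 1 μ))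
      (Metric.closedBall (0 : Lp ℝ 1 μ) 1)
    have himgball : (LinearEquiv.neg ℝ (M := Lp ℝ 1 μ)) '' Metric.closedBall (0 : Lp ℝ 1 μ) 1 =
        Metric.closedBall (0 : Lp ℝ 1 μ) 1 := by
      ext x
      simp only [Set.mem_image, Metric.mem_closedBall, dist_zero_right, LinearEquiv.neg_apply]
      constructor
      · rintro ⟨y, hy, rfl⟩
        rwa [norm_neg]
      · intro hx
        exact ⟨-x, by rwa [norm_neg], neg_neg x⟩
    rw [himgball] at himg
    rw [← himg]
    exact ⟨g, hg, rfl⟩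
  -- choose signs
  have hsign : ∀ i, ∃ ε : ℝ, (ε = 1 ∨ ε = -1) ∧ (∀ᵐ x ∂μ, 0 ≤ (ε • F i) x) := by
    intro i
    rcases aux_sign (hFext i) with h | h
    · refine ⟨1, Or.inl rfl, ?_⟩
      filter_upwards [Lp.coeFn_smul (1:ℝ) (F i), h] with x hx1 hx2
      rw [hx1]
      simpa using hx2
    · refine ⟨-1, Or.inr rfl, ?_⟩
      filter_upwards [Lp.coeFn_smul (-1:ℝ) (F i), h] with x hx1 hx2
      rw [hx1]
      simp only [Pi.smul_apply, smul_eq_mul, neg_one_mul]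
      linarith
  choose ε hε1 hε2 using hsign
  set f : ℕ → Lp ℝ 1 μ := fun i => ε i • F i with hfdef
  have hfext : ∀ i, f i ∈ Set.extremePoints ℝ (Metric.closedBall (0 : Lp ℝ 1 μ) 1) := by
    intro i
    rcases hε1 i with h | h
    · simp only [hfdef, h, one_smul]
      exact hFext i
    · simp only [hfdef, h, neg_smul, one_smul]
      exact hnegext _ (hFext i)
  have hfnorm : ∀ i, ‖f i‖ = 1 := fun i => aux_extreme_norm_one (hfext i)
  have hcontra1 : ∀ i j : ℕ, i ≠ j → F i ≠ F j := by
    intro i j hij h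
    exact hinj.ne hij (φ.injective h)
  have hcontra2 : ∀ i j : ℕ, F i ≠ -F j := by
    intro i j h
    apply hsym i j
    apply φ.injective
    rw [map_neg]
    exact h
  have hfne : ∀ i j, i ≠ j → f i ≠ f j := by
    intro i j hij hEq
    have h1 : ε i • F i = ε j • F j := hEq
    rcases hε1 i with hi | hi <;> rcases hε1 j with hj | hj <;> rw [hi, hj] at h1
    · simp only [one_smul] at h1
      exact hcontra1 i j hij h1
    · simp only [one_smul, neg_smul] at h1
      exact hcontra2 i j h1
    · simp only [one_smul, neg_smul] at h1
      exact hcontra2 i j (neg_eq_iff_eq_neg.1 h1)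
    · simp only [neg_smul, one_smul, neg_inj] at h1
      exact hcontra1 i j hij h1
  have hfdisj : ∀ i j, i ≠ j → ∀ᵐ x ∂μ, f i x = 0 ∨ f j x = 0 :=
    fun i j hij => aux_disjoint (hfext i) (hfext j) (hε2 i) (hε2 j) (hfne i j hij)
  intro n a
  -- transport to L¹
  have key : ‖∑ i : Fin n, a i • e i‖ = ‖∑ i : Fin n, (a i * ε i) • f i‖ := by
    rw [← φ.norm_map (∑ i : Fin n, a i • e i)]
    congr 1
    rw [map_sum]
    apply Finset.sum_congr rfl
    intro i _
    rw [φ.map_smul, hfdef]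
    simp only
    rw [smul_smul, mul_assoc]
    congr 1
    rcases hε1 i with h | h <;> rw [h] <;> norm_num
  rw [key]
  have := aux_norm_sum (fun i : Fin n => f i) (fun i => hfnorm i) (fun i => hε2 i)
    (fun i j hij => hfdisj i j (fun h => hij (Fin.val_injective h)))
    (fun i => a i * ε i)
  rw [this]
  apply Finset.sum_congr rfl
  intro i _
  rw [abs_mul]
  rcases hε1 i with h | h <;> rw [h] <;> simp
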